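/- Let α > 0, I > 0, q > 0, let n_1, …, n_P > 0 be group sizes with N = ∑_{p=1}^P n_p, and let ε_1, …, ε_P > 0 be per-group privacy budgets with minimum ε₁ := min_p ε_p. Let σ* := q · √(2 · I · α / ε₁) be the noise multiplier required when every point is given the uniform budget ε₁ (i.e. the unique σ > 0 with I · 2 q² α / σ² = ε₁), and let σ_sample := q · N / (∑_{p=1}^P n_p · √(ε_p / (2 · I · α))) be the shared noise multiplier calibrated so that the weighted average of the per-group sample rates σ_sample · √(ε_p / (2 I α)) equals q. Then σ_sample ≤ σ*, with equality if and only if ε_p = ε₁ for all p. -/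

import Mathlib

/-- **Sample reduces the noise multiplier versus standard DP-SGD.** The shared noise
multiplier `σ_sample` calibrated so that the weighted average of the per-group sample
rates equals `q` is at most the noise multiplier `σ* = q √(2 I α / ε₁)` needed for the
uniform minimal budget `ε₁ = min_p ε_p`, with equality iff all budgets equal `ε₁`. -/
theorem sample_noise_le_standard (P : ℕ) (α I q : ℝ)
    (hα : 0 < α) (hI : 0 < I) (hq : 0 < q)
    (n : Fin P → ℝ) (hn : ∀ p, 0 < n p)
    (N : ℝ) (hN : N = ∑ p, n p)
    (ε : Fin P → ℝ) (hε : ∀ p, 0 < ε p)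
    (εmin : ℝ) (hεmin_le : ∀ p, εmin ≤ ε p) (hεmin_mem : ∃ p, ε p = εmin)
    (σstar : ℝ) (hσstar : σstar = q * Real.sqrt (2 * I * α / εmin))
    (σsample : ℝ)
    (hσsample : σsample = q * N / (∑ p, n p * Real.sqrt (ε p / (2 * I * α)))) :
    σsample ≤ σstar ∧ (σsample = σstar ↔ ∀ p, ε p = εmin) := by
  obtain ⟨p0, hp0⟩ := hεmin_mem
  have hc : (0:ℝ) < 2 * I * α := by positivity
  have hεminpos : 0 < εmin := hp0 ▸ hε p0
  set c := 2 * I * α with hcdef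
  set m := Real.sqrt (εmin / c) with hm
  have hmpos : 0 < m := Real.sqrt_pos.mpr (by positivity)
  have hsm : ∀ p, m ≤ Real.sqrt (ε p / c) := fun p =>
    Real.sqrt_le_sqrt (by gcongr; exact hεmin_le p)
  have hNpos : 0 < N := by
    rw [hN]
    exact Finset.sum_pos (fun p _ => hn p) ⟨p0, Finset.mem_univ p0⟩
  set D := ∑ p, n p * Real.sqrt (ε p / c) with hD
  have hDpos : 0 < D :=
    Finset.sum_pos (fun p _ => mul_pos (hn p)
      (Real.sqrt_pos.mpr (by have := hε p; positivity))) ⟨p0, Finset.mem_univ p0⟩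
  have hDlb : N * m ≤ D := by
    rw [hN, Finset.sum_mul]
    exact Finset.sum_le_sum fun p _ =>
      mul_le_mul_of_nonneg_left (hsm p) (hn p).le
  have hstar : σstar = q * N / (N * m) := by
    have h1 : Real.sqrt (c / εmin) = m⁻¹ := by
      rw [hm, ← Real.sqrt_inv, inv_div]
    rw [hσstar, h1]
    field_simp
  constructor
  · rw [hσsample, hstar]
    exact div_le_div_of_nonneg_left (by positivity) (by positivity) hDlb
  · constructor
    · intro heq
      have hDeq : D = N * m := by
        rw [hσsample, hstar] at heq
        have := (div_eq_div_iff (by positivity) (by positivity)).mp heq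
        have hqN : (0:ℝ) < q * N := by positivity
        nlinarith
      have hz : ∑ p, n p * (Real.sqrt (ε p / c) - m) = 0 := by
        have : ∑ p, n p * (Real.sqrt (ε p / c) - m)
            = D - N * m := by
          rw [hD, hN, Finset.sum_mul, ← Finset.sum_sub_distrib]
          congr 1; ext p; ring
        rw [this, hDeq, sub_self]
      intro p
      have hterm := (Finset.sum_eq_zero_iff_of_nonneg
        (fun p _ => mul_nonneg (hn p).le (sub_nonneg.mpr (hsm p)))).mp hz p
        (Finset.mem_univ p)
      have hsq : Real.sqrt (ε p / c) = m := by
        rcases mul_eq_zero.mp hterm with h | h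
        · exact absurd h (hn p).ne'
        · linarith [sub_eq_zero.mp h]
      have h2 : ε p / c = εmin / c :=
        (Real.sqrt_inj (by have := hε p; positivity) (by positivity)).mp
          (by rw [hsq, hm])
      field_simp at h2
      exact h2
    · intro hall
      have : D = N * m := by
        rw [hD, hN, Finset.sum_mul]
        exact Finset.sum_congr rfl fun p _ => by rw [hall p, hm]
      rw [hσsample, this, hstar]
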